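/- Let p ∈ (1,∞), s ∈ (1/p, 1), N ∈ ℕ and T' > 0. Then there exists a constant C = C(T', s, p) > 0 such that for all T ∈ (0, T'] and all continuous functions f, g: [0,T] → ℝᴺ with finite fractional seminorms [f]_{W^{s,p}(0,T)}, [g]_{W^{s,p}(0,T)} < ∞ and g(0) = 0, the scalar product h = ⟨f, g⟩: [0,T] → ℝ satisfies ‖h‖_{W^{s,p}(0,T)} ≤ C ( [f]_{W^{s,p}(0,T)} + sup_{t∈[0,T]}|f(t)| ) ‖g‖_{W^{s,p}(0,T)}. -/

import Mathlib

open Set MeasureTheory Filter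
open scoped RealInnerProductSpace

noncomputable section

variable {n : ℕ}

/-- Arc-length derivative along the curve `g` of a field `f`. -/
def aderiv {F : Type*} [NormedAddCommGroup F] [NormedSpace ℝ F]
    (g : ℝ → EuclideanSpace ℝ (Fin n)) (f : ℝ → F) : ℝ → F :=
  fun x => ‖deriv g x‖⁻¹ • deriv f x

/-- Unit tangent `∂ₛγ`. -/
def utang (g : ℝ → EuclideanSpace ℝ (Fin n)) : ℝ → EuclideanSpace ℝ (Fin n) :=
  aderiv g g

/-- Normal projection along `g`. -/
def nperp (g f : ℝ → EuclideanSpace ℝ (Fin n)) : ℝ → EuclideanSpace ℝ (Fin n) :=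
  fun x => f x - ⟪f x, utang g x⟫ • utang g x

/-- Curvature vector `κ = ∂ₛ²γ`. -/
def curvV (g : ℝ → EuclideanSpace ℝ (Fin n)) : ℝ → EuclideanSpace ℝ (Fin n) :=
  aderiv g (utang g)

/-- Projected arc-length derivative `∂ₛ^⊥`. -/
def aderivP (g f : ℝ → EuclideanSpace ℝ (Fin n)) : ℝ → EuclideanSpace ℝ (Fin n) :=
  nperp g (aderiv g f)

/-- Iterated projected arc-length derivative `(∂ₛ^⊥)^k`. -/
def aderivPIter (g : ℝ → EuclideanSpace ℝ (Fin n)) :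
    ℕ → (ℝ → EuclideanSpace ℝ (Fin n)) → ℝ → EuclideanSpace ℝ (Fin n)
  | 0, f => f
  | k + 1, f => aderivP g (aderivPIter g k f)

/-- Iterated full arc-length derivative `∂ₛ^k`. -/
def aderivIter (g : ℝ → EuclideanSpace ℝ (Fin n)) :
    ℕ → (ℝ → EuclideanSpace ℝ (Fin n)) → ℝ → EuclideanSpace ℝ (Fin n)
  | 0, f => f
  | k + 1, f => aderiv g (aderivIter g k f)

/-- Elastic energy `E(γ) = ∫ |κ|² ds`. -/
def elE (g : ℝ → EuclideanSpace ℝ (Fin n)) : ℝ :=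
  ∫ x in (-1:ℝ)..1, ‖curvV g x‖ ^ 2 * ‖deriv g x‖

/-- Length `L(γ) = ∫ ds`. -/
def elL (g : ℝ → EuclideanSpace ℝ (Fin n)) : ℝ :=
  ∫ x in (-1:ℝ)..1, ‖deriv g x‖

/-- Energy gradient `∇E(γ) = 2(∂ₛ^⊥)²κ + |κ|²κ`. -/
def gradElE (g : ℝ → EuclideanSpace ℝ (Fin n)) : ℝ → EuclideanSpace ℝ (Fin n) :=
  fun x => (2:ℝ) • aderivPIter g 2 (curvV g) x + ‖curvV g x‖ ^ 2 • curvV g x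

/-- Lagrange multiplier `λ(γ)`. -/
def lagMul (g : ℝ → EuclideanSpace ℝ (Fin n)) : ℝ :=
  (∫ x in (-1:ℝ)..1, ⟪gradElE g x, curvV g x⟫ * ‖deriv g x‖) / elE g

/-- Time derivative `∂ₜγ` of a family. -/
def timeD (γ : ℝ → ℝ → EuclideanSpace ℝ (Fin n)) : ℝ → ℝ → EuclideanSpace ℝ (Fin n) :=
  fun t x => deriv (fun s => γ s x) t

/-- Tangential speed `φ = ⟨∂ₜγ, ∂ₛγ⟩`. -/
def tanSpeed (γ : ℝ → ℝ → EuclideanSpace ℝ (Fin n)) : ℝ → ℝ → ℝ :=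
  fun t x => ⟪timeD γ t x, utang (γ t) x⟫

/-- Normal velocity `V = ∂ₜγ − φ ∂ₛγ`. -/
def normalVel (γ : ℝ → ℝ → EuclideanSpace ℝ (Fin n)) : ℝ → ℝ → EuclideanSpace ℝ (Fin n) :=
  fun t x => timeD γ t x - tanSpeed γ t x • utang (γ t) x

/-- Normal time derivative `∂ₜ^⊥N` of a field along the family γ. -/
def timeDPerp (γ N : ℝ → ℝ → EuclideanSpace ℝ (Fin n)) : ℝ → ℝ → EuclideanSpace ℝ (Fin n) :=
  fun t x => deriv (fun s => N s x) t
    - ⟪deriv (fun s => N s x) t, utang (γ t) x⟫ • utang (γ t) x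

/-- Shape operator `S_p = −Dξ(p)`. -/
def shapeOp (ξ : EuclideanSpace ℝ (Fin n) → EuclideanSpace ℝ (Fin n))
    (p v : EuclideanSpace ℝ (Fin n)) : EuclideanSpace ℝ (Fin n) :=
  -(fderiv ℝ ξ p v)

/-- `L²(ds)` norm of a field along `g`. -/
def l2ds (g f : ℝ → EuclideanSpace ℝ (Fin n)) : ℝ :=
  Real.sqrt (∫ x in (-1:ℝ)..1, ‖f x‖ ^ 2 * ‖deriv g x‖)

/-- Fixed-length free-boundary elastic flow on `[0,T)`. -/
def IsFLFBEF (T : ℝ) (ξ : EuclideanSpace ℝ (Fin n) → EuclideanSpace ℝ (Fin n))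
    (τ : ℝ → ℝ) (γ : ℝ → ℝ → EuclideanSpace ℝ (Fin n)) : Prop :=
  ContDiff ℝ (⊤ : ℕ∞) (fun p : ℝ × ℝ => γ p.1 p.2) ∧
  (∀ t ∈ Ico (0:ℝ) T, ∀ x ∈ Icc (-1:ℝ) 1, deriv (γ t) x ≠ 0) ∧
  (∀ t ∈ Ico (0:ℝ) T, 0 < elE (γ t)) ∧
  (∀ t ∈ Ico (0:ℝ) T, ∀ x ∈ Icc (-1:ℝ) 1,
    timeD γ t x = -(gradElE (γ t) x - lagMul (γ t) • curvV (γ t) x)) ∧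
  (∀ t ∈ Ico (0:ℝ) T, ∀ x ∈ ({-1, 1} : Set ℝ),
    ⟪timeD γ t x, utang (γ t) x⟫ = 0 ∧
    utang (γ t) x = τ x • ξ (γ t x) ∧
    ‖ξ (γ t x)‖ = 1 ∧
    aderivP (γ t) (curvV (γ t)) x = -(τ x • shapeOp ξ (γ t x) (curvV (γ t) x)))


open scoped ENNReal

/-- The `p`-th power of the Sobolev–Slobodetskii seminorm `[f]_{W^{s,p}(0,T)}`,
as a Lebesgue integral in `ℝ≥0∞`. -/
def slobGapP (p s T : ℝ) {F : Type*} [NormedAddCommGroup F] (f : ℝ → F) : ℝ≥0∞ :=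
  ∫⁻ q in (Set.Ioo (0:ℝ) T) ×ˢ (Set.Ioo (0:ℝ) T),
    ENNReal.ofReal (‖f q.1 - f q.2‖ ^ p / |q.1 - q.2| ^ (1 + s * p))

/-- The Sobolev–Slobodetskii seminorm `[f]_{W^{s,p}(0,T)}`. -/
def slobSemi (p s T : ℝ) {F : Type*} [NormedAddCommGroup F] (f : ℝ → F) : ℝ :=
  (slobGapP p s T f).toReal ^ (1 / p)

/-- The Sobolev–Slobodetskii norm
`‖f‖_{W^{s,p}(0,T)} = (‖f‖_{L^p(0,T)}^p + [f]_{W^{s,p}(0,T)}^p)^{1/p}`. -/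
def slobNorm (p s T : ℝ) {F : Type*} [NormedAddCommGroup F] (f : ℝ → F) : ℝ :=
  ((∫ x in (0:ℝ)..T, ‖f x‖ ^ p) + (slobGapP p s T f).toReal) ^ (1 / p)

namespace SlobAux

variable {E : Type*} [NormedAddCommGroup E]

/-- The kernel of the Slobodetskii seminorm. -/
def ker (p s : ℝ) (g : ℝ → E) (x y : ℝ) : ℝ≥0∞ :=
  ENNReal.ofReal (‖g x - g y‖ ^ p / |x - y| ^ (1 + s * p))

lemma ker_symm (p s : ℝ) (g : ℝ → E) (x y : ℝ) : ker p s g x y = ker p s g y x := by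
  simp [ker, norm_sub_rev, abs_sub_comm]

lemma measurable_ker (p s : ℝ) (hp : 0 ≤ p) (hq : 0 ≤ 1 + s * p) {g : ℝ → E}
    (hg : Continuous g) :
    Measurable fun q : ℝ × ℝ => ker p s g q.1 q.2 := by
  apply Measurable.ennreal_ofReal
  exact Measurable.div
    (((((hg.comp continuous_fst).sub (hg.comp continuous_snd)).norm).rpow_const
      (fun x => Or.inr hp)).measurable)
    ((((continuous_fst.sub continuous_snd).abs).rpow_const (fun x => Or.inr hq)).measurable)

lemma measurable_ker_left (p s : ℝ) (hp : 0 ≤ p) (hq : 0 ≤ 1 + s * p) {g : ℝ → E}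
    (hg : Continuous g) (u : ℝ) :
    Measurable fun v => ker p s g v u := by
  apply Measurable.ennreal_ofReal
  exact Measurable.div
    ((((hg.sub continuous_const).norm).rpow_const (fun x => Or.inr hp)).measurable)
    ((((continuous_id.sub continuous_const).abs).rpow_const (fun x => Or.inr hq)).measurable)

/-- `d(u) = ∫_{(0,T)} |g u - g v|^p / |u-v|^{1+sp} dv`. -/
def dfun (p s T : ℝ) (g : ℝ → E) (x : ℝ) : ℝ≥0∞ :=
  ∫⁻ y in Set.Ioo (0:ℝ) T, ker p s g x y

lemma measurable_dfun (p s T : ℝ) (hp : 0 ≤ p) (hq : 0 ≤ 1 + s * p) {g : ℝ → E}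
    (hg : Continuous g) :
    Measurable (dfun p s T g) :=
  (measurable_ker p s hp hq hg).lintegral_prod_right'

lemma lintegral_dfun (p s T : ℝ) (hp : 0 ≤ p) (hq : 0 ≤ 1 + s * p) {g : ℝ → E}
    (hg : Continuous g) :
    ∫⁻ x in Set.Ioo (0:ℝ) T, dfun p s T g x = slobGapP p s T g := by
  rw [slobGapP, Measure.volume_eq_prod, ← Measure.prod_restrict]
  exact (lintegral_prod _ (measurable_ker p s hp hq hg).aemeasurable).symm

lemma ofReal_div3 (m : ℝ) : ENNReal.ofReal m / 3 = ENNReal.ofReal (m / 3) := by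
  rw [ENNReal.ofReal_div_of_pos (by norm_num), ENNReal.ofReal_ofNat]

lemma markov_third {J : Set ℝ} (hJ : MeasurableSet J) {F : ℝ → ℝ≥0∞} (hF : Measurable F)
    {D : ℝ≥0∞} (hD : D ≠ ⊤) {ℓ : ℝ} (hℓ : 0 < ℓ)
    (hint : ∫⁻ u in J, F u ≤ D) :
    volume ({u | 3 * D / ENNReal.ofReal ℓ < F u} ∩ J) ≤ ENNReal.ofReal ℓ / 3 := by
  rw [← Measure.restrict_apply' hJ]
  rcases eq_or_ne D 0 with hD0 | hD0
  · subst hD0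
    have h0 : F =ᵐ[volume.restrict J] 0 := by
      rw [← lintegral_eq_zero_iff hF]
      exact le_antisymm (by simpa using hint) zero_le
    have hnull : volume.restrict J {u | 3 * 0 / ENNReal.ofReal ℓ < F u} = 0 := by
      refine measure_mono_null (fun u hu => ?_) (ae_iff.mp h0)
      simp only [Set.mem_setOf_eq] at hu ⊢
      intro h
      rw [h] at hu
      simp at hu
    rw [hnull]
    exact zero_le
  · set a := 3 * D / ENNReal.ofReal ℓ with ha
    have h3D : 3 * D ≠ ⊤ := ENNReal.mul_ne_top (by simp) hD
    have hℓ0 : ENNReal.ofReal ℓ ≠ 0 := by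
      simp [ENNReal.ofReal_eq_zero, not_le, hℓ]
    have hℓt : ENNReal.ofReal ℓ ≠ ⊤ := ENNReal.ofReal_ne_top
    have ha0 : a ≠ 0 := by
      rw [ha]
      exact (ENNReal.div_pos (by simp [hD0]) hℓt).ne'
    have hat : a ≠ ⊤ := (ENNReal.div_lt_top h3D hℓ0).ne
    have hda : D / a ≠ ⊤ := (ENNReal.div_lt_top hD ha0).ne
    calc volume.restrict J {u | a < F u}
        ≤ volume.restrict J {u | a ≤ F u} :=
          measure_mono (Set.setOf_subset_setOf.mpr (fun u => le_of_lt))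
      _ ≤ (∫⁻ u in J, F u) / a := meas_ge_le_lintegral_div hF.aemeasurable ha0 hat
      _ ≤ D / a := ENNReal.div_le_div_right hint a
      _ ≤ ENNReal.ofReal ℓ / 3 := by
          rw [← ENNReal.toReal_le_toReal hda (by
            exact (ENNReal.div_lt_top hℓt (by norm_num)).ne)]
          rw [ENNReal.toReal_div, ENNReal.toReal_div, ENNReal.toReal_div,
            ENNReal.toReal_mul, ENNReal.toReal_ofReal hℓ.le]
          have hd : 0 < D.toReal := ENNReal.toReal_pos hD0 hD
          have h3 : ((3:ℝ≥0∞)).toReal = (3:ℝ) := by simp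
          rw [h3]
          have heq : D.toReal / (3 * D.toReal / ℓ) = ℓ / 3 := by
            field_simp
          rw [heq]

lemma exists_good₀ (p s T : ℝ) (hp : 0 ≤ p) (hq : 0 ≤ 1 + s * p) {g : ℝ → E}
    (hg : Continuous g) (hB : slobGapP p s T g ≠ ⊤) (hT : 0 < T) :
    ∃ u ∈ Set.Ioo (0:ℝ) T, dfun p s T g u ≤ 3 * slobGapP p s T g / ENNReal.ofReal T := by
  have h1 : ∫⁻ w in Set.Ioo (0:ℝ) T, dfun p s T g w ≤ slobGapP p s T g :=
    le_of_eq (lintegral_dfun p s T hp hq hg)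
  have m1 := markov_third measurableSet_Ioo (measurable_dfun p s T hp hq hg) hB hT h1
  by_contra hcon
  push_neg at hcon
  have hsub2 : Set.Ioo (0:ℝ) T ⊆
      {w | 3 * slobGapP p s T g / ENNReal.ofReal T < dfun p s T g w} ∩ Set.Ioo 0 T :=
    fun w hw => ⟨hcon w hw, hw⟩
  have hm := le_trans (measure_mono hsub2) m1
  rw [Real.volume_Ioo, sub_zero, ofReal_div3] at hm
  have := (ENNReal.ofReal_le_ofReal_iff (by positivity)).1 hm
  linarith

lemma exists_good (p s T : ℝ) (hp : 0 ≤ p) (hq : 0 ≤ 1 + s * p) {g : ℝ → E}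
    (hg : Continuous g) (hB : slobGapP p s T g ≠ ⊤) {a b : ℝ} (hab : a < b)
    (hsub : Set.Ioo a b ⊆ Set.Ioo 0 T) {u : ℝ}
    (hD : dfun p s T g u ≠ ⊤) :
    ∃ v ∈ Set.Ioo a b,
      dfun p s T g v ≤ 3 * slobGapP p s T g / ENNReal.ofReal (b - a) ∧
      ker p s g v u ≤ 3 * dfun p s T g u / ENNReal.ofReal (b - a) := by
  have hba : 0 < b - a := sub_pos.2 hab
  have h1 : ∫⁻ w in Set.Ioo a b, dfun p s T g w ≤ slobGapP p s T g := by
    calc ∫⁻ w in Set.Ioo a b, dfun p s T g w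
        ≤ ∫⁻ w in Set.Ioo (0:ℝ) T, dfun p s T g w := lintegral_mono_set hsub
      _ = slobGapP p s T g := lintegral_dfun p s T hp hq hg
  have h2 : ∫⁻ w in Set.Ioo a b, ker p s g w u ≤ dfun p s T g u := by
    calc ∫⁻ w in Set.Ioo a b, ker p s g w u
        ≤ ∫⁻ w in Set.Ioo (0:ℝ) T, ker p s g w u := lintegral_mono_set hsub
      _ = ∫⁻ w in Set.Ioo (0:ℝ) T, ker p s g u w :=
          lintegral_congr fun w => ker_symm p s g w u
      _ = dfun p s T g u := rfl
  have m1 := markov_third measurableSet_Ioo (measurable_dfun p s T hp hq hg) hB hba h1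
  have m2 := markov_third measurableSet_Ioo (measurable_ker_left p s hp hq hg u) hD hba h2
  by_contra hcon
  push_neg at hcon
  have hsub2 : Set.Ioo a b ⊆
      ({w | 3 * slobGapP p s T g / ENNReal.ofReal (b - a) < dfun p s T g w} ∩ Set.Ioo a b) ∪
      ({w | 3 * dfun p s T g u / ENNReal.ofReal (b - a) < ker p s g w u} ∩ Set.Ioo a b) := by
    intro w hw
    rcases le_or_gt (dfun p s T g w) (3 * slobGapP p s T g / ENNReal.ofReal (b - a)) with h | h
    · exact Or.inr ⟨hcon w hw h, hw⟩
    · exact Or.inl ⟨h, hw⟩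
  have hm := le_trans (measure_mono hsub2)
    (le_trans (measure_union_le _ _) (add_le_add m1 m2))
  rw [Real.volume_Ioo, ofReal_div3, ← ENNReal.ofReal_add (by positivity) (by positivity)] at hm
  have := (ENNReal.ofReal_le_ofReal_iff (by positivity)).1 hm
  linarith

lemma add_rpow_le {a b : ℝ} (p : ℝ) (ha : 0 ≤ a) (hb : 0 ≤ b) (hp : 0 ≤ p) :
    (a + b) ^ p ≤ 2 ^ p * (a ^ p + b ^ p) := by
  have h1 : a + b ≤ 2 * max a b := by
    rcases le_total a b with h | h
    · rw [max_eq_right h]; linarith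
    · rw [max_eq_left h]; linarith
  calc (a + b) ^ p ≤ (2 * max a b) ^ p :=
        Real.rpow_le_rpow (by linarith) h1 hp
    _ = 2 ^ p * (max a b) ^ p :=
        Real.mul_rpow (by norm_num) (le_max_of_le_left ha)
    _ ≤ 2 ^ p * (a ^ p + b ^ p) := by
        apply mul_le_mul_of_nonneg_left _ (by positivity)
        rcases le_total a b with h | h
        · rw [max_eq_right h]
          have := Real.rpow_nonneg ha p
          linarith
        · rw [max_eq_left h]
          have := Real.rpow_nonneg hb p
          linarith

lemma rpow_add_le_add (a b p : ℝ) (ha : 0 ≤ a) (hb : 0 ≤ b) (hp : 1 ≤ p) :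
    (a ^ p + b ^ p) ^ (1 / p) ≤ a + b := by
  have := NNReal.rpow_add_rpow_le_add a.toNNReal b.toNNReal hp
  have hcoe := NNReal.coe_le_coe.2 this
  rw [NNReal.coe_add] at hcoe
  rw [Real.coe_toNNReal a ha, Real.coe_toNNReal b hb] at hcoe
  refine le_trans (le_of_eq ?_) hcoe
  rw [NNReal.coe_rpow, NNReal.coe_add, NNReal.coe_rpow, NNReal.coe_rpow,
    Real.coe_toNNReal a ha, Real.coe_toNNReal b hb]

lemma morrey (p s : ℝ) (hp : 1 < p) (hs₁ : 1 / p < s) (T' : ℝ) (hT' : 0 < T') :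
    ∃ C₀ : ℝ, 0 < C₀ ∧ ∀ T : ℝ, 0 < T → T ≤ T' → ∀ g : ℝ → E, Continuous g →
      slobGapP p s T g ≠ ⊤ → g 0 = 0 →
      ∀ t ∈ Set.Icc (0:ℝ) T, ‖g t‖ ≤ C₀ * (slobGapP p s T g).toReal ^ (1 / p) := by
  have hp0 : (0:ℝ) < p := lt_trans one_pos hp
  have hsp1 : 1 < s * p := by
    have := (div_lt_iff₀ hp0).1 hs₁
    linarith
  have hq0 : (0:ℝ) ≤ 1 + s * p := by linarith
  set β : ℝ := (s * p - 1) / p with hβ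
  have hβ0 : 0 < β := div_pos (by linarith) hp0
  set r : ℝ := 2 ^ (-β) with hr
  have hr0 : 0 < r := Real.rpow_pos_of_pos two_pos _
  have hr1 : r < 1 := by
    rw [hr]
    exact Real.rpow_lt_one_of_one_lt_of_neg one_lt_two (by linarith)
  set c : ℝ := 2 ^ (1 + s * p) * 18 with hc
  have hc0 : 0 < c := by positivity
  have h1r : (0:ℝ) < 1 - r := by linarith
  refine ⟨2 * c ^ (1 / p) * T' ^ β * (1 - r)⁻¹,
    mul_pos (mul_pos (mul_pos two_pos (Real.rpow_pos_of_pos hc0 _))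
      (Real.rpow_pos_of_pos hT' _)) (inv_pos.2 h1r), ?_⟩
  intro T hT hTT' g hg hB hg0 t ht
  set B := slobGapP p s T g with hBdef
  set b₀ : ℝ := B.toReal with hb₀
  have hb₀0 : 0 ≤ b₀ := ENNReal.toReal_nonneg
  have hℓpos : ∀ k : ℕ, 0 < T / 2 ^ k := fun k => by positivity
  have hℓhalf : ∀ k : ℕ, T / 2 ^ (k + 1) = (T / 2 ^ k) / 2 := fun k => by
    rw [pow_succ]; ring
  have hℓmono : ∀ k : ℕ, T / 2 ^ (k + 1) ≤ T / 2 ^ k := fun k => by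
    rw [hℓhalf k]
    linarith [hℓpos k]
  have hℓle2 : ∀ k : ℕ, T / 2 ^ (k + 1) ≤ T / 2 := fun k => by
    apply div_le_div_of_nonneg_left hT.le two_pos
    exact le_self_pow₀ (by norm_num) (Nat.succ_ne_zero k)
  -- the chain estimate
  have chain : ∀ x ∈ Set.Icc (0:ℝ) T, ∀ u₀ ∈ Set.Ioo (0:ℝ) T,
      dfun p s T g u₀ ≤ 3 * B / ENNReal.ofReal (T / 2 ^ 0) →
      ‖g x - g u₀‖ ≤ (c * b₀) ^ (1 / p) * T ^ β * (1 - r)⁻¹ := by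
    intro x hx u₀ hu₀ h0
    set J : ℕ → Set ℝ := fun k =>
      if k = 0 then Set.Ioo 0 T
      else if T / 2 ^ k ≤ x then Set.Ioo (x - T / 2 ^ k) x
      else Set.Ioo x (x + T / 2 ^ k) with hJ
    have hJsub : ∀ k, J k ⊆ Set.Ioo 0 T := by
      intro k
      rcases Nat.eq_zero_or_pos k with rfl | hk
      · simp [hJ]
      · obtain ⟨m, rfl⟩ := Nat.exists_eq_add_of_le hk
        simp only [hJ]
        rw [if_neg (by omega : ¬ 1 + m = 0)]
        split_ifs with hcx
        · intro w hw
          refine ⟨lt_of_le_of_lt ?_ hw.1, lt_of_lt_of_le hw.2 hx.2⟩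
          linarith
        · intro w hw
          push_neg at hcx
          refine ⟨lt_of_le_of_lt hx.1 hw.1, ?_⟩
          have h2 : T / 2 ^ (1 + m) ≤ T / 2 := by
            rw [add_comm]
            exact hℓle2 m
          calc w < x + T / 2 ^ (1 + m) := hw.2
            _ < T / 2 ^ (1 + m) + T / 2 ^ (1 + m) := by linarith
            _ ≤ T := by linarith
    have hJdist : ∀ k, ∀ w ∈ J k, |w - x| ≤ T / 2 ^ k := by
      intro k w hw
      rcases Nat.eq_zero_or_pos k with rfl | hk
      · simp only [hJ, if_pos rfl] at hw
        rw [pow_zero, div_one, abs_sub_le_iff]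
        constructor
        · linarith [hw.2, hx.1]
        · linarith [hw.1, hx.2]
      · obtain ⟨m, rfl⟩ := Nat.exists_eq_add_of_le hk
        simp only [hJ] at hw
        rw [if_neg (by omega : ¬ 1 + m = 0)] at hw
        rw [abs_sub_le_iff]
        split_ifs at hw with hcx
        · constructor
          · linarith [hw.2, hℓpos (1 + m)]
          · linarith [hw.1]
        · constructor
          · linarith [hw.2]
          · linarith [hw.1, hℓpos (1 + m)]
    have hstep : ∀ (k : ℕ) (u : ℝ), u ∈ J k →
        dfun p s T g u ≤ 3 * B / ENNReal.ofReal (T / 2 ^ k) →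
        ∃ v, v ∈ J (k + 1) ∧
          dfun p s T g v ≤ 3 * B / ENNReal.ofReal (T / 2 ^ (k + 1)) ∧
          ‖g v - g u‖ ≤ (c * b₀) ^ (1 / p) * T ^ β * r ^ k := by
      intro k u huJ hud
      have hofR0 : ENNReal.ofReal (T / 2 ^ k) ≠ 0 := by
        simp [ENNReal.ofReal_eq_zero, not_le, hℓpos k]
      have hD : dfun p s T g u ≠ ⊤ :=
        ne_top_of_le_ne_top ((ENNReal.div_lt_top (ENNReal.mul_ne_top (by simp) hB) hofR0).ne) hud
      obtain ⟨aa, bb, haabb, hJIoo, hlen⟩ :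
          ∃ aa bb : ℝ, aa < bb ∧ J (k + 1) = Set.Ioo aa bb ∧ bb - aa = T / 2 ^ (k + 1) := by
        simp only [hJ]
        rw [if_neg (Nat.succ_ne_zero k)]
        split_ifs with hcx
        · exact ⟨x - T / 2 ^ (k + 1), x, by linarith [hℓpos (k + 1)], rfl, by ring⟩
        · exact ⟨x, x + T / 2 ^ (k + 1), by linarith [hℓpos (k + 1)], rfl, by ring⟩
      have hsubv : Set.Ioo aa bb ⊆ Set.Ioo (0:ℝ) T := hJIoo ▸ hJsub (k + 1)
      obtain ⟨w, hwmem, hwd, hwker⟩ := exists_good p s T hp0.le hq0 hg hB haabb hsubv hD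
      rw [hlen] at hwd hwker
      have hwJ : w ∈ J (k + 1) := hJIoo ▸ hwmem
      refine ⟨w, hwJ, hwd, ?_⟩
      have hdw : |w - x| ≤ T / 2 ^ (k + 1) := hJdist (k + 1) w hwJ
      have hdu : |u - x| ≤ T / 2 ^ k := hJdist k u huJ
      set ℓk := T / 2 ^ k with hℓk
      have hℓkpos : 0 < ℓk := hℓpos k
      have hdvu : |w - u| ≤ 2 * ℓk := by
        calc |w - u| ≤ |w - x| + |x - u| := abs_sub_le w x u
          _ ≤ T / 2 ^ (k + 1) + ℓk := by
              rw [abs_sub_comm x u]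
              exact add_le_add hdw hdu
          _ ≤ 2 * ℓk := by
              have := hℓmono k
              rw [← hℓk] at this
              linarith
      have hXnn : (0:ℝ) ≤ ‖g w - g u‖ ^ p := Real.rpow_nonneg (norm_nonneg _) p
      have hYnn : (0:ℝ) ≤ c * ℓk ^ (s * p - 1) * b₀ := by positivity
      have hXY : ‖g w - g u‖ ^ p ≤ c * ℓk ^ (s * p - 1) * b₀ := by
        rcases eq_or_ne w u with rfl | hwu
        · rw [sub_self, norm_zero, Real.zero_rpow hp0.ne']
          exact hYnn
        · have hm : 0 < |w - u| := abs_pos.2 (sub_ne_zero.2 hwu)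
          have hmK : 0 < |w - u| ^ (1 + s * p) := Real.rpow_pos_of_pos hm _
          have e1 : ENNReal.ofReal (‖g w - g u‖ ^ p) =
              ker p s g w u * ENNReal.ofReal (|w - u| ^ (1 + s * p)) := by
            rw [ker, ← ENNReal.ofReal_mul (by positivity), div_mul_cancel₀ _ hmK.ne']
          have hKe : |w - u| ^ (1 + s * p) ≤ (2 * ℓk) ^ (1 + s * p) :=
            Real.rpow_le_rpow (abs_nonneg _) hdvu (by linarith)
          have e2 : ker p s g w u * ENNReal.ofReal (|w - u| ^ (1 + s * p)) ≤
              (3 * (3 * B / ENNReal.ofReal ℓk) / ENNReal.ofReal (T / 2 ^ (k + 1))) *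
                ENNReal.ofReal ((2 * ℓk) ^ (1 + s * p)) := by
            apply mul_le_mul'
            · exact le_trans hwker (ENNReal.div_le_div_right (mul_le_mul_right hud 3) _)
            · exact ENNReal.ofReal_le_ofReal hKe
          set R := (3 * (3 * B / ENNReal.ofReal ℓk) / ENNReal.ofReal (T / 2 ^ (k + 1))) *
              ENNReal.ofReal ((2 * ℓk) ^ (1 + s * p)) with hR
          have hofRk : ENNReal.ofReal ℓk ≠ 0 := by
            simp [ENNReal.ofReal_eq_zero, not_le, hℓkpos]
          have hofRk1 : ENNReal.ofReal (T / 2 ^ (k + 1)) ≠ 0 := by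
            simp [ENNReal.ofReal_eq_zero, not_le, hℓpos (k + 1)]
          have hRtop : R ≠ ⊤ := by
            apply ENNReal.mul_ne_top _ ENNReal.ofReal_ne_top
            apply (ENNReal.div_lt_top _ hofRk1).ne
            exact ENNReal.mul_ne_top (by simp)
              ((ENNReal.div_lt_top (ENNReal.mul_ne_top (by simp) hB) hofRk).ne)
          have e3 : ‖g w - g u‖ ^ p ≤ R.toReal := by
            have hle := le_trans (le_of_eq e1) e2
            calc ‖g w - g u‖ ^ p = (ENNReal.ofReal (‖g w - g u‖ ^ p)).toReal :=
                  (ENNReal.toReal_ofReal hXnn).symm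
              _ ≤ R.toReal := ENNReal.toReal_mono hRtop hle
          refine le_trans e3 ?_
          have hRcalc : R.toReal =
              3 * (3 * b₀ / ℓk) / (T / 2 ^ (k + 1)) * ((2 * ℓk) ^ (1 + s * p)) := by
            rw [hR, ENNReal.toReal_mul, ENNReal.toReal_div, ENNReal.toReal_mul,
              ENNReal.toReal_div, ENNReal.toReal_mul,
              ENNReal.toReal_ofReal hℓkpos.le,
              ENNReal.toReal_ofReal (hℓpos (k + 1)).le,
              ENNReal.toReal_ofReal (by positivity), ← hb₀]
            norm_num
          rw [hRcalc, hℓhalf k, ← hℓk]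
          have h2ℓ : (2 * ℓk) ^ (1 + s * p) = 2 ^ (1 + s * p) * ℓk ^ (1 + s * p) :=
            Real.mul_rpow (by norm_num) hℓkpos.le
          have hℓsplit : ℓk ^ (1 + s * p) = ℓk ^ (s * p - 1) * ℓk ^ (2:ℕ) := by
            rw [← Real.rpow_natCast ℓk 2, ← Real.rpow_add hℓkpos]
            congr 1
            push_cast
            ring
          rw [h2ℓ, hℓsplit, hc]
          apply le_of_eq
          field_simp
          ring
      have hnorm : ‖g w - g u‖ = (‖g w - g u‖ ^ p) ^ (1 / p) := by
        rw [← Real.rpow_mul (norm_nonneg _), mul_one_div, div_self hp0.ne', Real.rpow_one]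
      rw [hnorm]
      calc (‖g w - g u‖ ^ p) ^ (1 / p) ≤ (c * ℓk ^ (s * p - 1) * b₀) ^ (1 / p) :=
            Real.rpow_le_rpow hXnn hXY (by positivity)
        _ = (c * b₀) ^ (1 / p) * T ^ β * r ^ k := by
            rw [show c * ℓk ^ (s * p - 1) * b₀ = (c * b₀) * ℓk ^ (s * p - 1) by ring,
              Real.mul_rpow (by positivity) (Real.rpow_nonneg hℓkpos.le _),
              ← Real.rpow_mul hℓkpos.le, mul_one_div, ← hβ]
            have hTr : ℓk ^ β = T ^ β * r ^ k := by
              rw [hℓk, div_eq_mul_inv, Real.mul_rpow hT.le (by positivity)]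
              congr 1
              rw [← Real.rpow_natCast (2:ℝ) k, ← Real.rpow_neg (by norm_num : (0:ℝ) ≤ 2),
                ← Real.rpow_mul (by norm_num : (0:ℝ) ≤ 2), hr,
                ← Real.rpow_natCast ((2:ℝ) ^ (-β)) k,
                ← Real.rpow_mul (by norm_num : (0:ℝ) ≤ 2)]
              congr 1
              ring
            rw [hTr]
            ring
    -- build the sequence
    choose! v hv1 hv2 hv3 using hstep
    set u : ℕ → ℝ := fun k => Nat.rec u₀ (fun k uk => v k uk) k with hu
    have hu0 : u 0 = u₀ := rfl
    have hbase : ∀ k, u k ∈ J k ∧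
        dfun p s T g (u k) ≤ 3 * B / ENNReal.ofReal (T / 2 ^ k) := by
      intro k
      induction k with
      | zero =>
        constructor
        · show u₀ ∈ J 0
          simp only [hJ, if_pos rfl]
          exact hu₀
        · exact h0
      | succ k ih =>
        exact ⟨hv1 k (u k) ih.1 ih.2, hv2 k (u k) ih.1 ih.2⟩
    have hdiffs : ∀ k, ‖g (u (k + 1)) - g (u k)‖ ≤ (c * b₀) ^ (1 / p) * T ^ β * r ^ k :=
      fun k => hv3 k (u k) (hbase k).1 (hbase k).2
    have hpart : ∀ k, ‖g (u k) - g (u 0)‖ ≤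
        (c * b₀) ^ (1 / p) * T ^ β * ∑ j ∈ Finset.range k, r ^ j := by
      intro k
      induction k with
      | zero => simp
      | succ k ih =>
        have htri : ‖g (u (k + 1)) - g (u 0)‖ ≤
            ‖g (u (k + 1)) - g (u k)‖ + ‖g (u k) - g (u 0)‖ := by
          have := dist_triangle (g (u (k + 1))) (g (u k)) (g (u 0))
          simpa [dist_eq_norm] using this
        calc ‖g (u (k + 1)) - g (u 0)‖
            ≤ ‖g (u (k + 1)) - g (u k)‖ + ‖g (u k) - g (u 0)‖ := htri
          _ ≤ (c * b₀) ^ (1 / p) * T ^ β * r ^ k +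
              (c * b₀) ^ (1 / p) * T ^ β * ∑ j ∈ Finset.range k, r ^ j :=
            add_le_add (hdiffs k) ih
          _ = (c * b₀) ^ (1 / p) * T ^ β * ∑ j ∈ Finset.range (k + 1), r ^ j := by
            rw [Finset.sum_range_succ]; ring
    have hgeo : ∀ k : ℕ, ∑ j ∈ Finset.range k, r ^ j ≤ (1 - r)⁻¹ := by
      intro k
      have hrk : (0:ℝ) ≤ r ^ k := pow_nonneg hr0.le k
      rw [geom_sum_eq hr1.ne k, ← one_div]
      rw [show (r ^ k - 1) / (r - 1) = (1 - r ^ k) / (1 - r) by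
        rw [div_eq_div_iff (by linarith) (by linarith)]; ring]
      exact (div_le_div_iff_of_pos_right h1r).2 (by linarith)
    have hbound : ∀ k, ‖g (u k) - g (u 0)‖ ≤ (c * b₀) ^ (1 / p) * T ^ β * (1 - r)⁻¹ := by
      intro k
      refine le_trans (hpart k) ?_
      apply mul_le_mul_of_nonneg_left (hgeo k) (by positivity)
    -- limit
    have hux : Filter.Tendsto u Filter.atTop (nhds x) := by
      rw [← tendsto_sub_nhds_zero_iff]
      refine squeeze_zero_norm (a := fun k : ℕ => T / 2 ^ k) (fun k => ?_) ?_
      · rw [Real.norm_eq_abs]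
        exact hJdist k (u k) (hbase k).1
      · have h2 : Filter.Tendsto (fun k : ℕ => T * (1 / 2 : ℝ) ^ k) Filter.atTop (nhds (T * 0)) :=
          (tendsto_pow_atTop_nhds_zero_of_lt_one (by norm_num) (by norm_num)).const_mul T
        simp only [mul_zero] at h2
        refine h2.congr fun k => ?_
        rw [div_pow, one_pow]
        ring
    have hgux : Filter.Tendsto (fun k => ‖g (u k) - g (u 0)‖) Filter.atTop
        (nhds ‖g x - g (u 0)‖) := by
      exact (((hg.tendsto x).comp hux).sub tendsto_const_nhds).norm
    have := le_of_tendsto hgux (Filter.Eventually.of_forall hbound)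
    rwa [hu0] at this
  -- apply the chain twice
  obtain ⟨u₀, hu₀, hu₀d⟩ := exists_good₀ p s T hp0.le hq0 hg hB hT
  have hu₀d' : dfun p s T g u₀ ≤ 3 * B / ENNReal.ofReal (T / 2 ^ 0) := by
    simpa using hu₀d
  have h1 := chain t ht u₀ hu₀ hu₀d'
  have h2 := chain 0 ⟨le_refl 0, hT.le⟩ u₀ hu₀ hu₀d'
  have hsplit : g t = (g t - g u₀) + (g u₀ - g 0) := by
    rw [hg0]
    abel
  have hnorm : ‖g t‖ ≤ ‖g t - g u₀‖ + ‖g 0 - g u₀‖ := by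
    calc ‖g t‖ = ‖(g t - g u₀) + (g u₀ - g 0)‖ := by rw [← hsplit]
      _ ≤ ‖g t - g u₀‖ + ‖g u₀ - g 0‖ := norm_add_le _ _
      _ = ‖g t - g u₀‖ + ‖g 0 - g u₀‖ := by rw [norm_sub_rev (g u₀) (g 0)]
  have hTβ : T ^ β ≤ T' ^ β := Real.rpow_le_rpow hT.le hTT' hβ0.le
  have hfinal : ‖g t‖ ≤ 2 * ((c * b₀) ^ (1 / p) * T ^ β * (1 - r)⁻¹) := by
    linarith
  refine le_trans hfinal ?_
  rw [Real.mul_rpow hc0.le hb₀0]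
  calc 2 * (c ^ (1 / p) * b₀ ^ (1 / p) * T ^ β * (1 - r)⁻¹)
      ≤ 2 * (c ^ (1 / p) * b₀ ^ (1 / p) * T' ^ β * (1 - r)⁻¹) := by
        have hb : (0:ℝ) ≤ b₀ ^ (1 / p) := Real.rpow_nonneg hb₀0 _
        have hcp : (0:ℝ) ≤ c ^ (1 / p) := Real.rpow_nonneg hc0.le _
        have := mul_le_mul_of_nonneg_left hTβ (mul_nonneg hcp hb)
        have h2 := mul_le_mul_of_nonneg_right this (inv_nonneg.2 h1r.le)
        nlinarith
    _ = 2 * c ^ (1 / p) * T' ^ β * (1 - r)⁻¹ * b₀ ^ (1 / p) := by ring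

set_option maxHeartbeats 1000000 in
lemma core (p s : ℝ) (hp : 1 < p) (hs₁ : 1 / p < s) (N : ℕ) (T' : ℝ) (hT' : 0 < T') :
    ∃ C : ℝ, 0 < C ∧
      ∀ T : ℝ, 0 < T → T ≤ T' →
      ∀ f g : ℝ → EuclideanSpace ℝ (Fin N), Continuous f → Continuous g →
        slobGapP p s T f ≠ ⊤ → slobGapP p s T g ≠ ⊤ →
        g 0 = 0 →
        slobNorm p s T (fun t => (⟪f t, g t⟫ : ℝ))
          ≤ C * (slobSemi p s T f + ⨆ t ∈ Set.Icc (0:ℝ) T, ‖f t‖) * slobNorm p s T g := by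
  obtain ⟨C₀, hC₀, hmor⟩ := morrey (E := EuclideanSpace ℝ (Fin N)) p s hp hs₁ T' hT'
  have hp0 : (0:ℝ) < p := lt_trans one_pos hp
  have hsp1 : 1 < s * p := by
    have := (div_lt_iff₀ hp0).1 hs₁
    linarith
  have hq0 : (0:ℝ) ≤ 1 + s * p := by linarith
  have h2p : (0:ℝ) ≤ 2 ^ p := Real.rpow_nonneg (by norm_num) p
  have hC₀p : (0:ℝ) ≤ C₀ ^ p := Real.rpow_nonneg hC₀.le p
  set K : ℝ := 1 + 2 ^ p + 2 ^ p * C₀ ^ p with hK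
  have hK1 : (1:ℝ) ≤ K := by nlinarith
  refine ⟨K ^ (1 / p), Real.rpow_pos_of_pos (by linarith) _, ?_⟩
  intro T hT hTT' f g hf hgc hBf hBg hg0
  set h : ℝ → ℝ := fun t => (⟪f t, g t⟫ : ℝ) with hh
  have hhc : Continuous h := hf.inner hgc
  -- sup of f
  set Sf : ℝ := ⨆ t ∈ Set.Icc (0:ℝ) T, ‖f t‖ with hSf
  have csup_eq : ∀ (P : Prop) (_ : P) (aa : ℝ), (⨆ _ : P, aa) = aa := by
    intro P hP aa
    haveI : Nonempty P := ⟨hP⟩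
    exact ciSup_const
  obtain ⟨M₀, hM₀⟩ := (isCompact_Icc (a := (0:ℝ)) (b := T)).exists_bound_of_continuousOn
    hf.continuousOn
  have hbddf : ∀ t : ℝ, (⨆ _ : t ∈ Set.Icc (0:ℝ) T, ‖f t‖) ≤ max M₀ 0 := by
    intro t
    rcases em (t ∈ Set.Icc (0:ℝ) T) with htt | htt
    · rw [csup_eq _ htt]
      exact le_max_of_le_left (hM₀ t htt)
    · haveI : IsEmpty (t ∈ Set.Icc (0:ℝ) T) := isEmpty_Prop.2 htt
      rw [Real.iSup_of_isEmpty]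
      exact le_max_right _ _
  have hbdd : BddAbove (Set.range fun t => ⨆ _ : t ∈ Set.Icc (0:ℝ) T, ‖f t‖) := by
    refine ⟨max M₀ 0, ?_⟩
    rintro y ⟨t, rfl⟩
    exact hbddf t
  have hSfle : ∀ x ∈ Set.Icc (0:ℝ) T, ‖f x‖ ≤ Sf := by
    intro x hx
    have := le_ciSup hbdd x
    rwa [csup_eq _ hx] at this
  have hSf0 : 0 ≤ Sf := le_trans (norm_nonneg (f 0)) (hSfle 0 ⟨le_refl 0, hT.le⟩)
  -- Morrey bound for g
  set bg : ℝ := (slobGapP p s T g).toReal with hbg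
  set bf : ℝ := (slobGapP p s T f).toReal with hbf
  have hbg0 : 0 ≤ bg := ENNReal.toReal_nonneg
  have hbf0 : 0 ≤ bf := ENNReal.toReal_nonneg
  set Mg : ℝ := C₀ * bg ^ (1 / p) with hMg
  have hMg0 : 0 ≤ Mg := by positivity
  have hgle : ∀ y ∈ Set.Icc (0:ℝ) T, ‖g y‖ ≤ Mg := hmor T hT hTT' g hgc hBg hg0
  -- L^p part
  set Ig : ℝ := ∫ x in (0:ℝ)..T, ‖g x‖ ^ p with hIg
  have hIg0 : 0 ≤ Ig :=
    intervalIntegral.integral_nonneg hT.le fun x _ => Real.rpow_nonneg (norm_nonneg _) p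
  have hIh0 : 0 ≤ ∫ x in (0:ℝ)..T, ‖h x‖ ^ p :=
    intervalIntegral.integral_nonneg hT.le fun x _ => Real.rpow_nonneg (norm_nonneg _) p
  have hLp : (∫ x in (0:ℝ)..T, ‖h x‖ ^ p) ≤ Sf ^ p * Ig := by
    rw [hIg, ← intervalIntegral.integral_const_mul]
    apply intervalIntegral.integral_mono_on hT.le
    · exact ((hhc.norm).rpow_const fun x => Or.inr hp0.le).intervalIntegrable 0 T
    · exact (continuous_const.mul ((hgc.norm).rpow_const fun x => Or.inr hp0.le)).intervalIntegrable 0 T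
    · intro x hx
      rw [← Real.mul_rpow hSf0 (norm_nonneg _)]
      apply Real.rpow_le_rpow (norm_nonneg _) _ hp0.le
      rw [Real.norm_eq_abs]
      calc |h x| ≤ ‖f x‖ * ‖g x‖ := abs_real_inner_le_norm _ _
        _ ≤ Sf * ‖g x‖ := mul_le_mul_of_nonneg_right (hSfle x hx) (norm_nonneg _)
  -- seminorm part
  set c₁ : ℝ := 2 ^ p * Sf ^ p with hc₁
  set c₂ : ℝ := 2 ^ p * Mg ^ p with hc₂
  have hSfp : (0:ℝ) ≤ Sf ^ p := Real.rpow_nonneg hSf0 p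
  have hMgp : (0:ℝ) ≤ Mg ^ p := Real.rpow_nonneg hMg0 p
  have hc₁0 : 0 ≤ c₁ := mul_nonneg h2p hSfp
  have hc₂0 : 0 ≤ c₂ := mul_nonneg h2p hMgp
  have hker : ∀ q : ℝ × ℝ, q ∈ Set.Ioo (0:ℝ) T ×ˢ Set.Ioo (0:ℝ) T →
      ker p s h q.1 q.2 ≤
        ENNReal.ofReal c₁ * ker p s g q.1 q.2 + ENNReal.ofReal c₂ * ker p s f q.1 q.2 := by
    rintro ⟨x, y⟩ ⟨hx, hy⟩
    have hxI : x ∈ Set.Icc (0:ℝ) T := Set.mem_Icc_of_Ioo hx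
    have hyI : y ∈ Set.Icc (0:ℝ) T := Set.mem_Icc_of_Ioo hy
    have hreal : ‖h x - h y‖ ^ p / |x - y| ^ (1 + s * p) ≤
        c₁ * (‖g x - g y‖ ^ p / |x - y| ^ (1 + s * p)) +
        c₂ * (‖f x - f y‖ ^ p / |x - y| ^ (1 + s * p)) := by
      rcases eq_or_ne x y with rfl | hxy
      · simp only [sub_self, norm_zero, Real.zero_rpow hp0.ne', zero_div]
        positivity
      · have hm : 0 < |x - y| ^ (1 + s * p) :=
          Real.rpow_pos_of_pos (abs_pos.2 (sub_ne_zero.2 hxy)) _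
        have hnum : ‖h x - h y‖ ^ p ≤ c₁ * ‖g x - g y‖ ^ p + c₂ * ‖f x - f y‖ ^ p := by
          have hinner : h x - h y = (⟪f x, g x - g y⟫ : ℝ) + (⟪f x - f y, g y⟫ : ℝ) := by
            rw [inner_sub_right, inner_sub_left]
            simp only [hh]
            ring
          have hsplit : ‖h x - h y‖ ≤ Sf * ‖g x - g y‖ + Mg * ‖f x - f y‖ := by
            rw [Real.norm_eq_abs, hinner]
            calc |(⟪f x, g x - g y⟫ : ℝ) + (⟪f x - f y, g y⟫ : ℝ)|
                ≤ |(⟪f x, g x - g y⟫ : ℝ)| + |(⟪f x - f y, g y⟫ : ℝ)| := abs_add_le _ _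
              _ ≤ ‖f x‖ * ‖g x - g y‖ + ‖f x - f y‖ * ‖g y‖ :=
                  add_le_add (abs_real_inner_le_norm _ _) (abs_real_inner_le_norm _ _)
              _ ≤ Sf * ‖g x - g y‖ + Mg * ‖f x - f y‖ := by
                  have e1 := mul_le_mul_of_nonneg_right (hSfle x hxI) (norm_nonneg (g x - g y))
                  have e2 := mul_le_mul_of_nonneg_left (hgle y hyI) (norm_nonneg (f x - f y))
                  have e3 : ‖f x - f y‖ * Mg = Mg * ‖f x - f y‖ := mul_comm _ _
                  linarith
          calc ‖h x - h y‖ ^ p ≤ (Sf * ‖g x - g y‖ + Mg * ‖f x - f y‖) ^ p :=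
                Real.rpow_le_rpow (norm_nonneg _) hsplit hp0.le
            _ ≤ 2 ^ p * ((Sf * ‖g x - g y‖) ^ p + (Mg * ‖f x - f y‖) ^ p) :=
                add_rpow_le p (by positivity) (by positivity) hp0.le
            _ = c₁ * ‖g x - g y‖ ^ p + c₂ * ‖f x - f y‖ ^ p := by
                rw [Real.mul_rpow hSf0 (norm_nonneg _), Real.mul_rpow hMg0 (norm_nonneg _),
                  hc₁, hc₂]
                ring
        calc ‖h x - h y‖ ^ p / |x - y| ^ (1 + s * p)
            ≤ (c₁ * ‖g x - g y‖ ^ p + c₂ * ‖f x - f y‖ ^ p) / |x - y| ^ (1 + s * p) := by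
              exact (div_le_div_iff_of_pos_right hm).2 hnum
          _ = c₁ * (‖g x - g y‖ ^ p / |x - y| ^ (1 + s * p)) +
              c₂ * (‖f x - f y‖ ^ p / |x - y| ^ (1 + s * p)) := by ring
    calc ker p s h x y = ENNReal.ofReal (‖h x - h y‖ ^ p / |x - y| ^ (1 + s * p)) := rfl
      _ ≤ ENNReal.ofReal (c₁ * (‖g x - g y‖ ^ p / |x - y| ^ (1 + s * p)) +
            c₂ * (‖f x - f y‖ ^ p / |x - y| ^ (1 + s * p))) := ENNReal.ofReal_le_ofReal hreal
      _ = ENNReal.ofReal c₁ * ker p s g x y + ENNReal.ofReal c₂ * ker p s f x y := by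
          rw [ENNReal.ofReal_add (by positivity) (by positivity),
            ENNReal.ofReal_mul hc₁0, ENNReal.ofReal_mul hc₂0]
          rfl
  have hBh : slobGapP p s T h ≤
      ENNReal.ofReal c₁ * slobGapP p s T g + ENNReal.ofReal c₂ * slobGapP p s T f := by
    have hmg := measurable_ker p s hp0.le hq0 hgc
    have hmf := measurable_ker p s hp0.le hq0 hf
    calc slobGapP p s T h
        ≤ ∫⁻ q in Set.Ioo (0:ℝ) T ×ˢ Set.Ioo (0:ℝ) T,
            (ENNReal.ofReal c₁ * ker p s g q.1 q.2 + ENNReal.ofReal c₂ * ker p s f q.1 q.2) :=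
          setLIntegral_mono ((hmg.const_mul _).add (hmf.const_mul _)) hker
      _ = ENNReal.ofReal c₁ * slobGapP p s T g + ENNReal.ofReal c₂ * slobGapP p s T f := by
          rw [lintegral_add_left (hmg.const_mul _), lintegral_const_mul _ hmg,
            lintegral_const_mul _ hmf]
          rfl
  have hBh' : (slobGapP p s T h).toReal ≤ c₁ * bg + c₂ * bf := by
    have hfin1 : ENNReal.ofReal c₁ * slobGapP p s T g ≠ ⊤ :=
      ENNReal.mul_ne_top ENNReal.ofReal_ne_top hBg
    have hfin2 : ENNReal.ofReal c₂ * slobGapP p s T f ≠ ⊤ :=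
      ENNReal.mul_ne_top ENNReal.ofReal_ne_top hBf
    have := ENNReal.toReal_mono (by exact ENNReal.add_ne_top.2 ⟨hfin1, hfin2⟩) hBh
    rwa [ENNReal.toReal_add hfin1 hfin2, ENNReal.toReal_mul, ENNReal.toReal_mul,
      ENNReal.toReal_ofReal hc₁0, ENNReal.toReal_ofReal hc₂0] at this
  have hMgpe : Mg ^ p = C₀ ^ p * bg := by
    rw [hMg, Real.mul_rpow hC₀.le (Real.rpow_nonneg hbg0 _), ← Real.rpow_mul hbg0,
      one_div_mul_cancel hp0.ne', Real.rpow_one]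
  -- assemble
  have htot : (∫ x in (0:ℝ)..T, ‖h x‖ ^ p) + (slobGapP p s T h).toReal ≤
      K * ((Sf ^ p + bf) * (Ig + bg)) := by
    have e1 : (∫ x in (0:ℝ)..T, ‖h x‖ ^ p) + (slobGapP p s T h).toReal ≤
        Sf ^ p * Ig + (c₁ * bg + c₂ * bf) := add_le_add hLp hBh'
    refine le_trans e1 ?_
    rw [hc₁, hc₂, hMgpe, hK]
    have ht1 : Sf ^ p * Ig ≤ (Sf ^ p + bf) * (Ig + bg) := by
      nlinarith [mul_nonneg hSfp hbg0, mul_nonneg hbf0 hIg0, mul_nonneg hbf0 hbg0]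
    have ht2 : Sf ^ p * bg ≤ (Sf ^ p + bf) * (Ig + bg) := by
      nlinarith [mul_nonneg hSfp hIg0, mul_nonneg hbf0 hIg0, mul_nonneg hbf0 hbg0]
    have ht3 : bg * bf ≤ (Sf ^ p + bf) * (Ig + bg) := by
      nlinarith [mul_nonneg hSfp hIg0, mul_nonneg hSfp hbg0, mul_nonneg hbf0 hIg0]
    calc Sf ^ p * Ig + (2 ^ p * Sf ^ p * bg + 2 ^ p * (C₀ ^ p * bg) * bf)
        = Sf ^ p * Ig + 2 ^ p * (Sf ^ p * bg) + 2 ^ p * C₀ ^ p * (bg * bf) := by ring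
      _ ≤ (Sf ^ p + bf) * (Ig + bg) + 2 ^ p * ((Sf ^ p + bf) * (Ig + bg)) +
          2 ^ p * C₀ ^ p * ((Sf ^ p + bf) * (Ig + bg)) :=
        add_le_add (add_le_add ht1 (mul_le_mul_of_nonneg_left ht2 h2p))
          (mul_le_mul_of_nonneg_left ht3 (mul_nonneg h2p hC₀p))
      _ = (1 + 2 ^ p + 2 ^ p * C₀ ^ p) * ((Sf ^ p + bf) * (Ig + bg)) := by ring
  have hKnn : (0:ℝ) ≤ K := by linarith
  have hfin : slobNorm p s T h ≤ (K * ((Sf ^ p + bf) * (Ig + bg))) ^ (1 / p) := by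
    rw [slobNorm]
    exact Real.rpow_le_rpow (add_nonneg hIh0 ENNReal.toReal_nonneg) htot (by positivity)
  refine le_trans hfin ?_
  have hsemi : slobSemi p s T f = bf ^ (1 / p) := rfl
  have hnormg : slobNorm p s T g = (Ig + bg) ^ (1 / p) := rfl
  calc (K * ((Sf ^ p + bf) * (Ig + bg))) ^ (1 / p)
      = K ^ (1 / p) * ((Sf ^ p + bf) ^ (1 / p) * (Ig + bg) ^ (1 / p)) := by
        rw [Real.mul_rpow hKnn (mul_nonneg (by positivity) (by positivity)),
          Real.mul_rpow (by positivity) (by positivity)]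
    _ ≤ K ^ (1 / p) * ((slobSemi p s T f + Sf) * slobNorm p s T g) := by
        apply mul_le_mul_of_nonneg_left _ (by positivity)
        rw [hnormg]
        apply mul_le_mul_of_nonneg_right _ (by positivity)
        have hbfe : bf = (bf ^ (1 / p)) ^ p := by
          rw [← Real.rpow_mul hbf0, one_div_mul_cancel hp0.ne', Real.rpow_one]
        calc (Sf ^ p + bf) ^ (1 / p) = (Sf ^ p + (bf ^ (1 / p)) ^ p) ^ (1 / p) := by
              rw [← hbfe]
          _ ≤ Sf + bf ^ (1 / p) :=
              rpow_add_le_add Sf (bf ^ (1 / p)) p hSf0 (Real.rpow_nonneg hbf0 _) hp.le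
          _ = slobSemi p s T f + Sf := by rw [hsemi]; ring
    _ = K ^ (1 / p) * (slobSemi p s T f + Sf) * slobNorm p s T g := by ring

lemma slobGapP_congr (p s T : ℝ) (hT : 0 ≤ T) {f f' : ℝ → E}
    (h : ∀ t ∈ Set.Icc (0:ℝ) T, f t = f' t) :
    slobGapP p s T f = slobGapP p s T f' := by
  rw [slobGapP, slobGapP]
  apply setLIntegral_congr_fun (measurableSet_Ioo.prod measurableSet_Ioo)
  rintro ⟨x, y⟩ ⟨hx, hy⟩
  simp only
  rw [h x (Set.Ioo_subset_Icc_self hx), h y (Set.Ioo_subset_Icc_self hy)]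

lemma slobNorm_congr (p s T : ℝ) (hT : 0 ≤ T) {f f' : ℝ → E}
    (h : ∀ t ∈ Set.Icc (0:ℝ) T, f t = f' t) :
    slobNorm p s T f = slobNorm p s T f' := by
  rw [slobNorm, slobNorm, slobGapP_congr p s T hT h,
    intervalIntegral.integral_congr (g := fun x => ‖f' x‖ ^ p)]
  intro x hx
  rw [Set.uIcc_of_le hT] at hx
  simp only
  rw [h x hx]

end SlobAux

/-- product estimate in Sobolev–Slobodetskii spaces (Lemma A.3). -/
theorem statement19
    (p s : ℝ) (hp : 1 < p) (hs₁ : 1 / p < s) (hs₂ : s < 1)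
    (N : ℕ) (T' : ℝ) (hT' : 0 < T') :
    ∃ C : ℝ, 0 < C ∧
      ∀ T : ℝ, 0 < T → T ≤ T' →
      ∀ f g : ℝ → EuclideanSpace ℝ (Fin N),
        ContinuousOn f (Icc 0 T) → ContinuousOn g (Icc 0 T) →
        slobGapP p s T f ≠ ⊤ → slobGapP p s T g ≠ ⊤ →
        g 0 = 0 →
        slobNorm p s T (fun t => (⟪f t, g t⟫ : ℝ))
          ≤ C * (slobSemi p s T f + ⨆ t ∈ Icc (0:ℝ) T, ‖f t‖) * slobNorm p s T g := by
  obtain ⟨C, hC, hcore⟩ := SlobAux.core p s hp hs₁ N T' hT'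
  refine ⟨C, hC, ?_⟩
  intro T hT hTT' f g hf hg hBf hBg hg0
  set π : ℝ → ℝ := fun t => max 0 (min t T) with hπ
  have hπc : Continuous π := continuous_const.max (continuous_id.min continuous_const)
  have hπmem : ∀ t, π t ∈ Set.Icc (0:ℝ) T := fun t =>
    ⟨le_max_left _ _, max_le hT.le (min_le_right _ _)⟩
  have hπid : ∀ t ∈ Set.Icc (0:ℝ) T, π t = t := by
    intro t ht
    simp only [hπ]
    rw [min_eq_left ht.2, max_eq_right ht.1]
  set f' : ℝ → EuclideanSpace ℝ (Fin N) := f ∘ π with hf'def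
  set g' : ℝ → EuclideanSpace ℝ (Fin N) := g ∘ π with hg'def
  have hf' : Continuous f' := hf.comp_continuous hπc hπmem
  have hg' : Continuous g' := hg.comp_continuous hπc hπmem
  have heqf : ∀ t ∈ Set.Icc (0:ℝ) T, f t = f' t := by
    intro t ht
    simp only [hf'def, Function.comp_apply, hπid t ht]
  have heqg : ∀ t ∈ Set.Icc (0:ℝ) T, g t = g' t := by
    intro t ht
    simp only [hg'def, Function.comp_apply, hπid t ht]
  have heqh : ∀ t ∈ Set.Icc (0:ℝ) T,
      (fun t => (⟪f t, g t⟫ : ℝ)) t = (fun t => (⟪f' t, g' t⟫ : ℝ)) t := by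
    intro t ht
    simp only
    rw [heqf t ht, heqg t ht]
  have hgapf : slobGapP p s T f = slobGapP p s T f' :=
    SlobAux.slobGapP_congr p s T hT.le heqf
  have hgapg : slobGapP p s T g = slobGapP p s T g' :=
    SlobAux.slobGapP_congr p s T hT.le heqg
  have hg'0 : g' 0 = 0 := by
    rw [hg'def]
    simp only [Function.comp_apply]
    rw [hπid 0 ⟨le_refl 0, hT.le⟩, hg0]
  have hsup : (⨆ t ∈ Set.Icc (0:ℝ) T, ‖f' t‖) = ⨆ t ∈ Set.Icc (0:ℝ) T, ‖f t‖ := by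
    apply iSup_congr
    intro t
    apply iSup_congr
    intro ht
    rw [heqf t ht]
  calc slobNorm p s T (fun t => (⟪f t, g t⟫ : ℝ))
      = slobNorm p s T (fun t => (⟪f' t, g' t⟫ : ℝ)) :=
        SlobAux.slobNorm_congr p s T hT.le heqh
    _ ≤ C * (slobSemi p s T f' + ⨆ t ∈ Set.Icc (0:ℝ) T, ‖f' t‖) * slobNorm p s T g' :=
        hcore T hT hTT' f' g' hf' hg' (hgapf ▸ hBf) (hgapg ▸ hBg) hg'0
    _ = C * (slobSemi p s T f + ⨆ t ∈ Set.Icc (0:ℝ) T, ‖f t‖) * slobNorm p s T g := by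
        rw [hsup, slobSemi, slobSemi, ← hgapf,
          SlobAux.slobNorm_congr p s T hT.le heqg]

end
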